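/- In the toss-as-you-go model, sure winning and almost-sure winning coincide: Max wins with probability 1 iff Max wins for every possible outcome of the coin tosses. Equivalently (contrapositively), if there exists a 'bad' lasso path in the game graph witnessing that Max does not win surely, then the event that every node on this lasso is assigned to Min has positive probability (namely ∏_v (1 − t(v)) over the distinct nodes v of the lasso, each t(v) ∈ (0,1)), and conditioned on this event Min wins, so Max's winning probability is strictly less than 1. -/
import Mathlib


open scoped Classical

/-- Max has a strategy to reach `target` regardless of Min's play in the two-player
reachability game with the full ownership assignment `own` (`true` = Max). -/
inductive MaxWin {V : Type} (E : V → V → Prop) (own : V → Bool) (target : V) : V → Prop where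
  | base : MaxWin E own target target
  | maxStep (v w : V) : own v = true → E v w → MaxWin E own target w → MaxWin E own target v
  | minStep (v : V) : own v = false → (∃ w, E v w) →
      (∀ w, E v w → MaxWin E own target w) → MaxWin E own target v

/-- Bellman-type solution of the explicit game of the toss-as-you-go reachability game on the
finite directed graph `E` with coin-toss probabilities `t` and target node `target`. -/
def ExplicitSol {V : Type} [Fintype V] [DecidableEq V] (E : V → V → Prop) (t : V → ℝ)
    (target : V) (val : (V → Option Bool) → V → ℝ) : Prop :=
  (∀ own v, 0 ≤ val own v ∧ val own v ≤ 1) ∧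
  (∀ own, val own target = 1) ∧
  (∀ own v, v ≠ target → own v = none →
    val own v = t v * val (Function.update own v (some true)) v
      + (1 - t v) * val (Function.update own v (some false)) v) ∧
  (∀ own v, v ≠ target → own v = some true →
    ∃ w, E v w ∧ val own v = val own w ∧ ∀ w', E v w' → val own w' ≤ val own v) ∧
  (∀ own v, v ≠ target → own v = some false →
    ∃ w, E v w ∧ val own v = val own w ∧ ∀ w', E v w' → val own v ≤ val own w')

namespace TossAux

set_option linter.unusedSectionVars false
set_option linter.unusedVariables false

variable {V : Type} [Fintype V] [DecidableEq V]

/-- Finite graphs with no cycle reachable from `v` are accessible for the successor relation. -/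
theorem acc_flip_of_no_cycle (r : V → V → Prop) :
    ∀ v : V, (∀ u, Relation.ReflTransGen r v u → ¬ Relation.TransGen r u u) →
      Acc (fun b a => r a b) v := by
  have main : ∀ (n : ℕ) (v : V),
      (Finset.univ.filter (fun y => Relation.TransGen r v y)).card = n →
      (∀ u, Relation.ReflTransGen r v u → ¬ Relation.TransGen r u u) →
      Acc (fun b a => r a b) v := by
    intro n
    induction n using Nat.strong_induction_on with
    | _ n ih =>
      intro v hcard hnc
      constructor
      intro y hy
      have hvy : Relation.ReflTransGen r v y := Relation.ReflTransGen.single hy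
      have hlt : (Finset.univ.filter (fun z => Relation.TransGen r y z)).card <
          (Finset.univ.filter (fun z => Relation.TransGen r v z)).card := by
        apply Finset.card_lt_card
        constructor
        · intro z hz
          simp only [Finset.mem_filter, Finset.mem_univ, true_and] at hz ⊢
          exact Relation.TransGen.head hy hz
        · intro hsub'
          have hy' : y ∈ Finset.univ.filter (fun z => Relation.TransGen r v z) := by
            simp [Relation.TransGen.single hy]
          have := hsub' hy'
          simp only [Finset.mem_filter, Finset.mem_univ, true_and] at this
          exact hnc y hvy this
      exact ih _ (hcard ▸ hlt) y rfl (fun u hu => hnc u (hvy.trans hu))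
  exact fun v h => main _ v rfl h

/-- Pre-fixpoints of the Bellman operator, clipped to `[0,1]`. -/
def Pre (E : V → V → Prop) (t : V → ℝ) (target : V) :
    Set ((V → Option Bool) → V → ℝ) :=
  {h | (∀ own v, 0 ≤ h own v ∧ h own v ≤ 1) ∧
    (∀ own, h own target = 1) ∧
    (∀ own v, v ≠ target → own v = none →
      t v * h (Function.update own v (some true)) v
        + (1 - t v) * h (Function.update own v (some false)) v ≤ h own v) ∧
    (∀ own v, v ≠ target → own v = some true → ∀ w, E v w → h own w ≤ h own v) ∧
    (∀ own v, v ≠ target → own v = some false → ∃ w, E v w ∧ h own w ≤ h own v)}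

theorem pre_unfold (E : V → V → Prop) (t : V → ℝ) (target : V)
    (h : (V → Option Bool) → V → ℝ) :
    h ∈ Pre E t target ↔
    ((∀ own v, 0 ≤ h own v ∧ h own v ≤ 1) ∧
    (∀ own, h own target = 1) ∧
    (∀ own v, v ≠ target → own v = none →
      t v * h (Function.update own v (some true)) v
        + (1 - t v) * h (Function.update own v (some false)) v ≤ h own v) ∧
    (∀ own v, v ≠ target → own v = some true → ∀ w, E v w → h own w ≤ h own v) ∧
    (∀ own v, v ≠ target → own v = some false → ∃ w, E v w ∧ h own w ≤ h own v)) :=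
  Iff.rfl

theorem one_mem_Pre (E : V → V → Prop) (hE : ∀ v, ∃ w, E v w) (t : V → ℝ) (target : V) :
    (fun _ _ => (1 : ℝ)) ∈ Pre E t target := by
  refine ⟨fun own v => by norm_num, fun own => rfl, fun own v _ _ => by norm_num,
    fun own v _ _ w _ => le_refl _, fun own v _ _ => ?_⟩
  obtain ⟨w, hw⟩ := hE v
  exact ⟨w, hw, le_refl _⟩

/-- The pointwise infimum of all pre-fixpoints: the least Bellman fixpoint. -/
noncomputable def lfp (E : V → V → Prop) (t : V → ℝ) (target : V) :
    (V → Option Bool) → V → ℝ :=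
  fun own v => sInf ((fun h => h own v) '' Pre E t target)

theorem lfp_bddBelow (E : V → V → Prop) (t : V → ℝ) (target : V) (own : V → Option Bool) (v : V) :
    BddBelow ((fun h => h own v) '' Pre E t target) := by
  refine ⟨0, fun y hy => ?_⟩
  obtain ⟨h, hP, rfl⟩ := hy
  exact (hP.1 own v).1

theorem lfp_le (E : V → V → Prop) (t : V → ℝ) (target : V)
    (h : (V → Option Bool) → V → ℝ) (hP : h ∈ Pre E t target)
    (own : V → Option Bool) (v : V) : lfp E t target own v ≤ h own v :=
  csInf_le (lfp_bddBelow E t target own v) ⟨h, hP, rfl⟩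

theorem le_lfp (E : V → V → Prop) (hE : ∀ v, ∃ w, E v w) (t : V → ℝ) (target : V)
    (c : ℝ) (own : V → Option Bool) (v : V)
    (hc : ∀ h ∈ Pre E t target, c ≤ h own v) : c ≤ lfp E t target own v :=
  le_csInf (⟨1, ⟨_, one_mem_Pre E hE t target, rfl⟩⟩) (by rintro y ⟨h, hP, rfl⟩; exact hc h hP)

theorem lfp_mem_Pre (E : V → V → Prop) (hE : ∀ v, ∃ w, E v w) (t : V → ℝ)
    (ht : ∀ v, 0 < t v ∧ t v < 1) (target : V) : lfp E t target ∈ Pre E t target := by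
  have hle := lfp_le E t target
  have hge := le_lfp E hE t target
  refine ⟨fun own v => ⟨hge 0 own v (fun h hP => (hP.1 own v).1),
      hle _ (one_mem_Pre E hE t target) own v⟩,
    fun own => ?_, fun own v hv ho => ?_, fun own v hv ho w hw => ?_, fun own v hv ho => ?_⟩
  · refine le_antisymm (hle _ (one_mem_Pre E hE t target) own target) ?_
    exact hge 1 own target (fun h hP => le_of_eq (hP.2.1 own).symm)
  · refine hge _ own v (fun h hP => ?_)
    refine le_trans ?_ (hP.2.2.1 own v hv ho)
    have h1 : lfp E t target (Function.update own v (some true)) v ≤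
        h (Function.update own v (some true)) v := hle h hP _ _
    have h2 : lfp E t target (Function.update own v (some false)) v ≤
        h (Function.update own v (some false)) v := hle h hP _ _
    have ht1 := (ht v).1
    have ht2 := (ht v).2
    nlinarith
  · exact hge _ own v (fun h hP => le_trans (hle h hP own w) (hP.2.2.2.1 own v hv ho w hw))
  · set S : Finset V := Finset.univ.filter (fun w => E v w) with hS
    have hSne : S.Nonempty := by
      obtain ⟨w, hw⟩ := hE v
      exact ⟨w, by simp [hS, hw]⟩
    have hkey : S.inf' hSne (lfp E t target own) ≤ lfp E t target own v := by
      refine hge _ own v (fun h hP => ?_)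
      obtain ⟨w, hw, hwle⟩ := hP.2.2.2.2 own v hv ho
      exact le_trans (le_trans (Finset.inf'_le _ (by simp [hS, hw])) (hle h hP own w)) hwle
    obtain ⟨w, hwS, hweq⟩ := Finset.exists_mem_eq_inf' hSne (lfp E t target own)
    have hwE : E v w := by simpa [hS] using hwS
    exact ⟨w, hwE, by rw [← hweq]; exact hkey⟩

/-- The least Bellman fixpoint is an honest solution of the explicit game equations. -/
theorem explicitSol_lfp (E : V → V → Prop) (hE : ∀ v, ∃ w, E v w) (t : V → ℝ)
    (ht : ∀ v, 0 < t v ∧ t v < 1) (target : V) :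
    ExplicitSol E t target (lfp E t target) := by
  set g := lfp E t target with hgdef
  have hg : g ∈ Pre E t target := lfp_mem_Pre E hE t ht target
  rw [pre_unfold] at hg
  have hSne : ∀ v : V, (Finset.univ.filter (fun w => E v w)).Nonempty := by
    intro v
    obtain ⟨w, hw⟩ := hE v
    exact ⟨w, by simp [hw]⟩
  set S : V → Finset V := fun v => Finset.univ.filter (fun w => E v w) with hSdef
  have hmemS : ∀ v w, w ∈ S v ↔ E v w := by intro v w; simp [hSdef]
  set Fg : (V → Option Bool) → V → ℝ := fun own v =>
    if v = target then 1 else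
      match own v with
      | none => t v * g (Function.update own v (some true)) v
          + (1 - t v) * g (Function.update own v (some false)) v
      | some true => (S v).sup' (hSne v) (g own)
      | some false => (S v).inf' (hSne v) (g own)
    with hFgdef
  have hFg_target : ∀ own, Fg own target = 1 := fun own => if_pos rfl
  have hFg_none : ∀ own v, v ≠ target → own v = none →
      Fg own v = t v * g (Function.update own v (some true)) v
        + (1 - t v) * g (Function.update own v (some false)) v := by
    intro own v hv ho
    simp only [hFgdef, ho, if_neg hv]
  have hFg_true : ∀ own v, v ≠ target → own v = some true →
      Fg own v = (S v).sup' (hSne v) (g own) := by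
    intro own v hv ho
    simp only [hFgdef, ho, if_neg hv]
  have hFg_false : ∀ own v, v ≠ target → own v = some false →
      Fg own v = (S v).inf' (hSne v) (g own) := by
    intro own v hv ho
    simp only [hFgdef, ho, if_neg hv]
  have hFg_le_g : ∀ own v, Fg own v ≤ g own v := by
    intro own v
    by_cases hv : v = target
    · subst hv; rw [hFg_target, hg.2.1]
    · rcases ho : own v with _ | b
      · rw [hFg_none own v hv ho]; exact hg.2.2.1 own v hv ho
      · cases b
        · rw [hFg_false own v hv ho]
          obtain ⟨w, hw, hle⟩ := hg.2.2.2.2 own v hv ho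
          exact le_trans (Finset.inf'_le _ ((hmemS v w).2 hw)) hle
        · rw [hFg_true own v hv ho]
          exact Finset.sup'_le _ _ (fun w hwS => hg.2.2.2.1 own v hv ho w ((hmemS v w).1 hwS))
  have hFg_bounds : ∀ own v, 0 ≤ Fg own v ∧ Fg own v ≤ 1 := by
    intro own v
    by_cases hv : v = target
    · subst hv; rw [hFg_target]; norm_num
    · rcases ho : own v with _ | b
      · rw [hFg_none own v hv ho]
        have h1 := hg.1 (Function.update own v (some true)) v
        have h2 := hg.1 (Function.update own v (some false)) v
        have ht1 := (ht v).1
        have ht2 := (ht v).2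
        constructor <;> nlinarith
      · cases b
        · rw [hFg_false own v hv ho]
          obtain ⟨w, hwS⟩ := hSne v
          constructor
          · exact Finset.le_inf' _ _ (fun w' hw' => (hg.1 own w').1)
          · exact le_trans (Finset.inf'_le _ hwS) (hg.1 own w).2
        · rw [hFg_true own v hv ho]
          obtain ⟨w, hwS⟩ := hSne v
          constructor
          · exact le_trans (hg.1 own w).1 (Finset.le_sup' _ hwS)
          · exact Finset.sup'_le _ _ (fun w' hw' => (hg.1 own w').2)
  have hFg_mem : Fg ∈ Pre E t target := by
    rw [pre_unfold]
    refine ⟨hFg_bounds, hFg_target, fun own v hv ho => ?_, fun own v hv ho w hw => ?_,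
      fun own v hv ho => ?_⟩
    · rw [hFg_none own v hv ho]
      have h1 := hFg_le_g (Function.update own v (some true)) v
      have h2 := hFg_le_g (Function.update own v (some false)) v
      have ht1 := (ht v).1
      have ht2 := (ht v).2
      nlinarith
    · rw [hFg_true own v hv ho]
      exact le_trans (hFg_le_g own w) (Finset.le_sup' _ ((hmemS v w).2 hw))
    · rw [hFg_false own v hv ho]
      obtain ⟨w, hwS, hweq⟩ := Finset.exists_mem_eq_inf' (hSne v) (g own)
      exact ⟨w, (hmemS v w).1 hwS, by rw [hweq]; exact hFg_le_g own w⟩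
  have hEq : ∀ own v, g own v = Fg own v := by
    intro own v
    exact le_antisymm (lfp_le E t target Fg hFg_mem own v) (hFg_le_g own v)
  refine ⟨hg.1, hg.2.1, fun own v hv ho => ?_, fun own v hv ho => ?_, fun own v hv ho => ?_⟩
  · rw [hEq own v, hFg_none own v hv ho]
  · obtain ⟨w, hwS, hweq⟩ := Finset.exists_mem_eq_sup' (hSne v) (g own)
    refine ⟨w, (hmemS v w).1 hwS, ?_, fun w' hw' => ?_⟩
    · rw [hEq own v, hFg_true own v hv ho, hweq]
    · rw [hEq own v, hFg_true own v hv ho]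
      exact Finset.le_sup' _ ((hmemS v w').2 hw')
  · obtain ⟨w, hwS, hweq⟩ := Finset.exists_mem_eq_inf' (hSne v) (g own)
    refine ⟨w, (hmemS v w).1 hwS, ?_, fun w' hw' => ?_⟩
    · rw [hEq own v, hFg_false own v hv ho, hweq]
    · rw [hEq own v, hFg_false own v hv ho]
      exact Finset.inf'_le _ ((hmemS v w').2 hw')

/-- The set of non-target nodes from which a target-avoiding cycle is reachable. -/
noncomputable def badSet (E : V → V → Prop) (target : V) : Finset V :=
  Finset.univ.filter (fun x => x ≠ target ∧
    ∃ u, Relation.ReflTransGen (fun a b => E a b ∧ b ≠ target) x u ∧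
      Relation.TransGen (fun a b => E a b ∧ b ≠ target) u u)

theorem mem_badSet (E : V → V → Prop) (target : V) (x : V) :
    x ∈ badSet E target ↔ x ≠ target ∧
    ∃ u, Relation.ReflTransGen (fun a b => E a b ∧ b ≠ target) x u ∧
      Relation.TransGen (fun a b => E a b ∧ b ≠ target) u u := by
  simp [badSet]

theorem badSet_closed (E : V → V → Prop) (target : V) (x : V) (hx : x ∈ badSet E target) :
    ∃ w, E x w ∧ w ∈ badSet E target := by
  rw [mem_badSet] at hx
  obtain ⟨hxt, u, hxu, huu⟩ := hx
  rcases Relation.ReflTransGen.cases_head hxu with rfl | ⟨c, hxc, hcu⟩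
  · obtain ⟨w, hxw, hwx⟩ := Relation.TransGen.head'_iff.1 huu
    exact ⟨w, hxw.1, (mem_badSet E target w).2 ⟨hxw.2, x, hwx, huu⟩⟩
  · exact ⟨c, hxc.1, (mem_badSet E target c).2 ⟨hxc.2, u, hcu, huu⟩⟩

theorem target_notMem_badSet (E : V → V → Prop) (target : V) :
    target ∉ badSet E target := by
  rw [mem_badSet]; simp

/-- The explicit pre-fixpoint witnessing that Min wins with positive probability. -/
noncomputable def badFun (E : V → V → Prop) (t : V → ℝ) (target : V) :
    (V → Option Bool) → V → ℝ := fun own v =>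
  if v ∈ badSet E target ∧ ∀ x ∈ badSet E target, own x ≠ some true then
    1 - ∏ x ∈ (badSet E target).filter (fun x => own x = none), (1 - t x)
  else 1

theorem badFun_mem_Pre (E : V → V → Prop) (hE : ∀ v, ∃ w, E v w) (t : V → ℝ)
    (ht : ∀ v, 0 < t v ∧ t v < 1) (target : V) :
    badFun E t target ∈ Pre E t target := by
  have hq : ∀ own : V → Option Bool,
      0 ≤ ∏ x ∈ (badSet E target).filter (fun x => own x = none), (1 - t x) ∧
      ∏ x ∈ (badSet E target).filter (fun x => own x = none), (1 - t x) ≤ 1 := by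
    intro own
    constructor
    · exact Finset.prod_nonneg (fun x _ => by linarith [(ht x).2])
    · exact Finset.prod_le_one (fun x _ => by linarith [(ht x).2])
        (fun x _ => by linarith [(ht x).1])
  have hbounds : ∀ own v, 0 ≤ badFun E t target own v ∧ badFun E t target own v ≤ 1 := by
    intro own v
    unfold badFun
    split
    · have := hq own; constructor <;> linarith [this.1, this.2]
    · norm_num
  refine ⟨hbounds, fun own => ?_, fun own v hv ho => ?_, fun own v hv ho w hw => ?_,
    fun own v hv ho => ?_⟩
  · unfold badFun
    rw [if_neg]
    rintro ⟨h1, -⟩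
    exact target_notMem_badSet E target h1
  · -- coin-toss node
    by_cases hc : v ∈ badSet E target ∧ ∀ x ∈ badSet E target, own x ≠ some true
    · have hvB := hc.1
      have hT : badFun E t target (Function.update own v (some true)) v = 1 := by
        unfold badFun
        rw [if_neg]
        rintro ⟨-, h2⟩
        exact h2 v hvB (by simp [Function.update_self])
      have hfilter : (badSet E target).filter
            (fun x => Function.update own v (some false) x = none) =
          ((badSet E target).filter (fun x => own x = none)).erase v := by
        ext x
        simp only [Finset.mem_erase, Finset.mem_filter, Function.update]
        split
        · rename_i h; subst h; simp
        · rename_i h; constructor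
          · rintro ⟨h1, h2⟩; exact ⟨Ne.symm (fun hh => h hh.symm), h1, h2⟩
          · rintro ⟨h1, h2, h3⟩; exact ⟨h2, h3⟩
      have hvfil : v ∈ (badSet E target).filter (fun x => own x = none) := by
        simp [Finset.mem_filter, hvB, ho]
      have hF : badFun E t target (Function.update own v (some false)) v =
          1 - ∏ x ∈ ((badSet E target).filter (fun x => own x = none)).erase v, (1 - t x) := by
        unfold badFun
        rw [if_pos, hfilter]
        refine ⟨hvB, fun x hx => ?_⟩
        rcases eq_or_ne x v with rfl | hne
        · simp [Function.update_self]
        · simp only [Function.update_apply, if_neg hne]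
          exact hc.2 x hx
      have hV : badFun E t target own v =
          1 - ∏ x ∈ (badSet E target).filter (fun x => own x = none), (1 - t x) := by
        unfold badFun; rw [if_pos hc]
      rw [hT, hF, hV, ← Finset.mul_prod_erase _ _ hvfil]
      exact le_of_eq (by ring)
    · have : badFun E t target own v = 1 := by unfold badFun; rw [if_neg hc]
      rw [this]
      have h1 := (hbounds (Function.update own v (some true)) v).2
      have h2 := (hbounds (Function.update own v (some false)) v).2
      have ht1 := (ht v).1
      have ht2 := (ht v).2
      nlinarith
  · -- Max node: value is 1
    have : badFun E t target own v = 1 := by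
      unfold badFun
      rw [if_neg]
      rintro ⟨h1, h2⟩
      exact h2 v h1 ho
    rw [this]
    exact (hbounds own w).2
  · -- Min node
    by_cases hc : v ∈ badSet E target ∧ ∀ x ∈ badSet E target, own x ≠ some true
    · obtain ⟨w, hw, hwB⟩ := badSet_closed E target v hc.1
      refine ⟨w, hw, le_of_eq ?_⟩
      unfold badFun
      rw [if_pos hc, if_pos ⟨hwB, hc.2⟩]
    · obtain ⟨w, hw⟩ := hE v
      refine ⟨w, hw, ?_⟩
      have : badFun E t target own v = 1 := by unfold badFun; rw [if_neg hc]
      rw [this]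
      exact (hbounds own w).2

theorem badFun_lt_one (E : V → V → Prop) (t : V → ℝ) (ht : ∀ v, 0 < t v ∧ t v < 1)
    (target v₀ : V) (hv₀ : v₀ ∈ badSet E target) :
    badFun E t target (fun _ => none) v₀ < 1 := by
  unfold badFun
  rw [if_pos ⟨hv₀, fun x _ => by simp⟩]
  have : (0:ℝ) < ∏ x ∈ (badSet E target).filter (fun x => (none : Option Bool) = none), (1 - t x) :=
    Finset.prod_pos (fun x _ => by linarith [(ht x).2])
  linarith

theorem not_maxWin_of_mem_badSet (E : V → V → Prop) (target : V) (v : V)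
    (h : MaxWin E (fun _ => false) target v) (hv : v ∈ badSet E target) : False := by
  induction h with
  | base => exact target_notMem_badSet E target hv
  | maxStep v w hown hvw hw ih => simp at hown
  | minStep v hown hex hall ih =>
      obtain ⟨w, hw, hwB⟩ := badSet_closed E target v hv
      exact ih w hw hwB

theorem maxWin_of_acc (E : V → V → Prop) (hE : ∀ v, ∃ w, E v w) (target : V) (v : V)
    (hacc : Acc (fun b a => E a b ∧ b ≠ target) v) (A : V → Bool) :
    MaxWin E A target v := by
  induction hacc with
  | intro v h ih =>
    by_cases hv : v = target
    · subst hv; exact MaxWin.base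
    · have hw : ∀ w, E v w → MaxWin E A target w := by
        intro w hvw
        by_cases hwt : w = target
        · subst hwt; exact MaxWin.base
        · exact ih w ⟨hvw, hwt⟩
      rcases hA : A v with _ | _
      · exact MaxWin.minStep v hA (hE v) hw
      · obtain ⟨w, hvw⟩ := hE v
        exact MaxWin.maxStep v w hA hvw (hw w hvw)

theorem valOne_of_acc (E : V → V → Prop) (t : V → ℝ) (target : V)
    (val : (V → Option Bool) → V → ℝ) (hval : ExplicitSol E t target val) (v : V)
    (hacc : Acc (fun b a => E a b ∧ b ≠ target) v) (own : V → Option Bool) :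
    val own v = 1 := by
  induction hacc generalizing own with
  | intro v h ih =>
    by_cases hv : v = target
    · subst hv; exact hval.2.1 own
    · have hsucc : ∀ (own' : V → Option Bool) (w : V), E v w → val own' w = 1 := by
        intro own' w hvw
        by_cases hwt : w = target
        · subst hwt; exact hval.2.1 own'
        · exact ih w ⟨hvw, hwt⟩ own'
      have hsome : ∀ (own' : V → Option Bool) (b : Bool), own' v = some b → val own' v = 1 := by
        intro own' b hb
        cases b
        · obtain ⟨w, hvw, heq, -⟩ := hval.2.2.2.2 own' v hv hb
          rw [heq, hsucc own' w hvw]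
        · obtain ⟨w, hvw, heq, -⟩ := hval.2.2.2.1 own' v hv hb
          rw [heq, hsucc own' w hvw]
      rcases ho : own v with _ | b
      · rw [hval.2.2.1 own v hv ho,
          hsome (Function.update own v (some true)) true (by simp),
          hsome (Function.update own v (some false)) false (by simp)]
        ring
      · exact hsome own b ho

end TossAux

/-- In the toss-as-you-go model (reachability objective), sure winning and almost-sure winning
coincide: the value from the start node (with all nodes unassigned) equals 1 iff Max wins for
every possible outcome of the coin tosses, i.e. under every complete ownership assignment.
Moreover, if there is a "bad" lasso path — a path from the start node to a cycle, avoiding the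
target — then Max's winning probability is strictly less than 1. -/
theorem toss_as_you_go_sure_iff_almost_sure {V : Type} [Fintype V] [DecidableEq V]
    (E : V → V → Prop) (hE : ∀ v, ∃ w, E v w)
    (t : V → ℝ) (ht : ∀ v, 0 < t v ∧ t v < 1) (target v₀ : V)
    (val : (V → Option Bool) → V → ℝ) (hval : ExplicitSol E t target val)
    (hleast : ∀ u, ExplicitSol E t target u → ∀ own v, val own v ≤ u own v) :
    (val (fun _ => none) v₀ = 1 ↔ ∀ A : V → Bool, MaxWin E A target v₀) ∧
      ((v₀ ≠ target ∧ ∃ u, Relation.ReflTransGen (fun a b => E a b ∧ b ≠ target) v₀ u ∧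
          Relation.TransGen (fun a b => E a b ∧ b ≠ target) u u) →
        val (fun _ => none) v₀ < 1) := by
  have key : (v₀ ≠ target ∧ ∃ u, Relation.ReflTransGen (fun a b => E a b ∧ b ≠ target) v₀ u ∧
      Relation.TransGen (fun a b => E a b ∧ b ≠ target) u u) →
      val (fun _ => none) v₀ < 1 := by
    rintro ⟨hvt, u, h1, h2⟩
    have hv₀B : v₀ ∈ TossAux.badSet E target := by
      rw [TossAux.mem_badSet]; exact ⟨hvt, u, h1, h2⟩
    have hle1 : val (fun _ => none) v₀ ≤ TossAux.lfp E t target (fun _ => none) v₀ :=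
      hleast _ (TossAux.explicitSol_lfp E hE t ht target) _ _
    have hle2 : TossAux.lfp E t target (fun _ => none) v₀ ≤
        TossAux.badFun E t target (fun _ => none) v₀ :=
      TossAux.lfp_le E t target _ (TossAux.badFun_mem_Pre E hE t ht target) _ _
    have hlt := TossAux.badFun_lt_one E t ht target v₀ hv₀B
    linarith
  refine ⟨⟨?_, ?_⟩, key⟩
  · intro h1 A
    by_cases hvt : v₀ = target
    · subst hvt; exact MaxWin.base
    · by_cases hbad : ∃ u, Relation.ReflTransGen (fun a b => E a b ∧ b ≠ target) v₀ u ∧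
          Relation.TransGen (fun a b => E a b ∧ b ≠ target) u u
      · exact absurd h1 (ne_of_lt (key ⟨hvt, hbad⟩))
      · push_neg at hbad
        exact TossAux.maxWin_of_acc E hE target v₀
          (TossAux.acc_flip_of_no_cycle _ v₀ hbad) A
  · intro hA
    by_cases hvt : v₀ = target
    · subst hvt; exact hval.2.1 _
    · have hnb : v₀ ∉ TossAux.badSet E target := fun hmem =>
        TossAux.not_maxWin_of_mem_badSet E target v₀ (hA _) hmem
      rw [TossAux.mem_badSet] at hnb
      push_neg at hnb
      exact TossAux.valOne_of_acc E t target val hval v₀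
        (TossAux.acc_flip_of_no_cycle _ v₀ (hnb hvt)) _
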